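/- Let m ≥ 1. There exist constants ε_0 > 0 and C_rad > 0, depending only on m, with the following property: for every continuous function Pert : [−1,1] → ℝ^m with Pert(0) = 0 and max_{−1 ≤ h ≤ 1} ‖Pert(h)‖ ≤ ε_0/(m · m!), the convex hull of the set {V(h) : h ∈ [−1,1]}, where V(h) = (h, h²/2, …, h^m/m!) + Pert(h), contains a closed ball of radius C_rad in ℝ^m. -/

import Mathlib

open Set Metric Pointwise

/-- The moment-type curve `h ↦ (h, h²/2, …, hᵐ/m!)` in `ℝᵐ`. -/
noncomputable def momentCurve (m : ℕ) (h : ℝ) : EuclideanSpace ℝ (Fin m) :=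
  (WithLp.equiv 2 (Fin m → ℝ)).symm
    (fun n => h ^ ((n : ℕ) + 1) / (Nat.factorial ((n : ℕ) + 1) : ℝ))

open scoped RealInnerProductSpace in
lemma momentCurve_span (m : ℕ) :
    Submodule.span ℝ (momentCurve m '' Icc (-1:ℝ) 1) = ⊤ := by
  rw [← Submodule.orthogonal_eq_bot_iff, Submodule.eq_bot_iff]
  intro w hw
  have hw' : ∀ h ∈ Icc (-1:ℝ) 1, ⟪momentCurve m h, w⟫ = 0 := fun h hh =>
    (Submodule.mem_orthogonal _ _).mp hw _ (Submodule.subset_span (mem_image_of_mem _ hh))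
  set p : Polynomial ℝ :=
    ∑ n : Fin m, Polynomial.C (w n / (Nat.factorial ((n:ℕ)+1) : ℝ)) * Polynomial.X ^ ((n:ℕ)+1)
    with hp
  have hpz : p = 0 := by
    apply Polynomial.eq_zero_of_infinite_isRoot
    apply Set.Infinite.mono (s := Icc (-1:ℝ) 1)
    · intro h hh
      have := hw' h hh
      simp only [PiLp.inner_apply, RCLike.inner_apply, conj_trivial] at this
      simp only [Polynomial.IsRoot, hp, Polynomial.eval_finset_sum, Polynomial.eval_mul,
        Polynomial.eval_C, Polynomial.eval_pow, Polynomial.eval_X, mem_setOf_eq]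
      rw [← this]
      apply Finset.sum_congr rfl
      intro n _
      show _ = w n * momentCurve m h n
      show _ = w n * (h ^ ((n:ℕ)+1) / (Nat.factorial ((n:ℕ)+1) : ℝ))
      ring
    · exact Set.Icc_infinite (by norm_num)
  ext k
  have hc : p.coeff ((k:ℕ)+1) = w k / (Nat.factorial ((k:ℕ)+1) : ℝ) := by
    rw [hp, Polynomial.finset_sum_coeff]
    rw [Finset.sum_eq_single k]
    · simp [Polynomial.coeff_C_mul, Polynomial.coeff_X_pow]
    · intro n _ hn
      simp only [Polynomial.coeff_C_mul, Polynomial.coeff_X_pow]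
      rw [if_neg, mul_zero]
      intro hh
      exact hn (Fin.ext (by omega))
    · simp
  rw [hpz] at hc
  simp only [Polynomial.coeff_zero] at hc
  have : w k = 0 := by
    field_simp at hc
    exact hc.symm.trans (zero_mul _)
  simpa using this

lemma momentCurve_affineSpan (m : ℕ) :
    affineSpan ℝ (momentCurve m '' Icc (-1:ℝ) 1) = ⊤ := by
  have hspan := momentCurve_span m
  set S := momentCurve m '' Icc (-1:ℝ) 1 with hS
  have h0 : (0 : EuclideanSpace ℝ (Fin m)) ∈ S := by
    refine ⟨0, by norm_num, ?_⟩
    ext n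
    show (0:ℝ) ^ ((n:ℕ)+1) / _ = 0
    simp
  rw [AffineSubspace.affineSpan_eq_top_iff_vectorSpan_eq_top_of_nonempty ℝ _ _ ⟨0, h0⟩]
  rw [eq_top_iff, ← hspan]
  apply Submodule.span_le.mpr
  intro v hv
  simpa using vsub_mem_vectorSpan ℝ hv h0


open scoped RealInnerProductSpace in
lemma closedBall_subset_of_add {m : ℕ} {K : Set (EuclideanSpace ℝ (Fin m))}
    (hK : Convex ℝ K) (hKc : IsClosed K) {c : EuclideanSpace ℝ (Fin m)} {r ε : ℝ}
    (hε : 0 < ε) (hsub : closedBall c r ⊆ K + closedBall (0 : EuclideanSpace ℝ (Fin m)) ε) :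
    closedBall c (r - ε) ⊆ K := by
  intro x hx
  by_contra hxK
  obtain ⟨f, u, hfa, hfx⟩ := geometric_hahn_banach_closed_point hK hKc hxK
  have hxr : dist x c ≤ r - ε := mem_closedBall.mp hx
  have hr : 0 ≤ r - ε := le_trans dist_nonneg hxr
  set w := (InnerProductSpace.toDual ℝ (EuclideanSpace ℝ (Fin m))).symm f with hwdef
  have hfw : ∀ z, ⟪w, z⟫ = f z := fun z => InnerProductSpace.toDual_symm_apply
  have hKne : K.Nonempty := by
    have : c ∈ closedBall c r := by simp; linarith
    obtain ⟨k, hk, e, he, rfl⟩ := Set.mem_add.mp (hsub this)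
    exact ⟨k, hk⟩
  have hw0 : w ≠ 0 := by
    obtain ⟨k, hk⟩ := hKne
    intro h0
    have h1 := hfa k hk
    have h2 : f k = 0 := by rw [← hfw k, h0]; simp
    have h3 : f x = 0 := by rw [← hfw x, h0]; simp
    rw [h2] at h1; rw [h3] at hfx; linarith
  have hnw : (0:ℝ) < ‖w‖ := norm_pos_iff.mpr hw0
  set y := x + (ε / ‖w‖) • w with hy
  have hyball : y ∈ closedBall c r := by
    have : dist y x = ε := by
      rw [hy, dist_eq_norm, add_sub_cancel_left, norm_smul, Real.norm_eq_abs, abs_of_pos (by positivity)]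
      field_simp
    calc dist y c ≤ dist y x + dist x c := dist_triangle _ _ _
      _ ≤ ε + (r - ε) := by rw [this]; linarith
      _ = r := by ring
  obtain ⟨k, hk, e, he, hke⟩ := Set.mem_add.mp (hsub hyball)
  have hfe : f e ≤ ε * ‖w‖ := by
    rw [← hfw e]
    calc ⟪w, e⟫ ≤ ‖w‖ * ‖e‖ := real_inner_le_norm _ _
      _ ≤ ‖w‖ * ε := by
          have : ‖e‖ ≤ ε := by simpa [dist_eq_norm] using mem_closedBall.mp he
          exact mul_le_mul_of_nonneg_left this (le_of_lt hnw)
      _ = ε * ‖w‖ := mul_comm _ _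
  have hfy1 : f y = f x + ε * ‖w‖ := by
    rw [hy, map_add, map_smul]
    rw [← hfw w, real_inner_self_eq_norm_sq]
    rw [smul_eq_mul, pow_two, ← mul_assoc, div_mul_cancel₀ _ hnw.ne']
  have hfy2 : f y = f k + f e := by rw [← hke, map_add]
  have := hfa k hk
  nlinarith [hfx]

/-- **Lemma JJ12.** There are constants `ε₀ > 0` and `C_rad > 0`, depending only on `m`,
such that for every continuous perturbation `Pert` on `[-1,1]` with `Pert 0 = 0` and
`‖Pert h‖ ≤ ε₀/(m·m!)`, the convex hull of the perturbed moment curve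
`V(h) = (h, h²/2, …, hᵐ/m!) + Pert(h)`, `h ∈ [-1,1]`, contains a closed ball of
radius `C_rad`. -/
theorem statement10 (m : ℕ) (hm : 1 ≤ m) :
    ∃ ε₀ > (0:ℝ), ∃ Crad > (0:ℝ),
      ∀ Pert : ℝ → EuclideanSpace ℝ (Fin m),
        ContinuousOn Pert (Icc (-1) 1) → Pert 0 = 0 →
        (∀ h ∈ Icc (-1:ℝ) 1, ‖Pert h‖ ≤ ε₀ / (m * Nat.factorial m)) →
        ∃ c, Metric.closedBall c Crad ⊆
          convexHull ℝ ((fun h => momentCurve m h + Pert h) '' Icc (-1) 1) := by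
  classical
  set E := EuclideanSpace ℝ (Fin m)
  set S : Set E := momentCurve m '' Icc (-1:ℝ) 1 with hSdef
  have hint : (interior (convexHull ℝ S)).Nonempty :=
    interior_convexHull_nonempty_iff_affineSpan_eq_top.mpr (momentCurve_affineSpan m)
  obtain ⟨c, hc⟩ := hint
  obtain ⟨r, hr, hball⟩ := Metric.isOpen_iff.mp isOpen_interior c hc
  set ε : ℝ := r / 6 with hεdef
  have hε : 0 < ε := by positivity
  have hmfac : (0:ℝ) < (m : ℝ) * (Nat.factorial m : ℝ) := by
    have := Nat.factorial_pos m
    positivity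
  refine ⟨ε * ((m : ℝ) * (Nat.factorial m : ℝ)), by positivity, ε, hε, ?_⟩
  intro Pert _hcont _h0 hbound
  set S' : Set E := (fun h => momentCurve m h + Pert h) '' Icc (-1:ℝ) 1 with hS'def
  set T : Set E := convexHull ℝ S' with hTdef
  have hεbound : ∀ h ∈ Icc (-1:ℝ) 1, ‖Pert h‖ ≤ ε := by
    intro h hh
    have hb := hbound h hh
    rwa [mul_div_assoc, div_self (ne_of_gt hmfac), mul_one] at hb
  -- S ⊆ S' + ball
  have hSsub : S ⊆ S' + closedBall (0 : E) ε := by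
    rintro - ⟨h, hh, rfl⟩
    refine Set.mem_add.mpr ⟨momentCurve m h + Pert h, ⟨h, hh, rfl⟩, -(Pert h), ?_, by abel⟩
    simpa [dist_eq_norm] using hεbound h hh
  have h1 : convexHull ℝ S ⊆ T + closedBall (0 : E) ε := by
    have h2 : convexHull ℝ S ⊆ convexHull ℝ (S' + closedBall (0 : E) ε) := convexHull_mono hSsub
    rwa [convexHull_add, (convex_closedBall _ _).convexHull_eq] at h2
  have hball2 : closedBall c (3*ε) ⊆ convexHull ℝ S := by
    intro x hx
    exact interior_subset (hball (lt_of_le_of_lt (mem_closedBall.mp hx) (by rw [hεdef]; linarith)))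
  have hconvT : Convex ℝ T := convex_convexHull ℝ S'
  have hconvcl : Convex ℝ (closure T) := hconvT.closure
  have h2 : closedBall c (3*ε) ⊆ closure T + closedBall (0 : E) ε :=
    (hball2.trans h1).trans (Set.add_subset_add subset_closure Subset.rfl)
  have h3 : closedBall c (2*ε) ⊆ closure T := by
    have h4 := closedBall_subset_of_add hconvcl isClosed_closure hε h2
    have : (3*ε) - ε = 2*ε := by ring
    rwa [this] at h4
  have hcint : closedBall c ε ⊆ interior (closure T) := by
    refine Subset.trans ?_ (interior_maximal (ball_subset_closedBall.trans h3) isOpen_ball)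
    intro x hx
    exact lt_of_le_of_lt (mem_closedBall.mp hx) (by linarith)
  -- affine span of S' is top
  have haff2 : affineSpan ℝ S' = ⊤ := by
    have hcl : (interior (convexHull ℝ (closure T))).Nonempty := by
      rw [hconvcl.convexHull_eq]
      exact ⟨c, hcint (mem_closedBall_self hε.le)⟩
    have h4 : affineSpan ℝ (closure T) = ⊤ :=
      interior_convexHull_nonempty_iff_affineSpan_eq_top.mp hcl
    have h5 : closure T ⊆ (affineSpan ℝ S' : Set E) := by
      have h6 : T ⊆ (affineSpan ℝ S' : Set E) := convexHull_subset_affineSpan S'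
      exact (AffineSubspace.closed_of_finiteDimensional (affineSpan ℝ S')).closure_subset_iff.mpr h6
    have h7 : affineSpan ℝ (closure T) ≤ affineSpan ℝ S' := by
      calc affineSpan ℝ (closure T) ≤ affineSpan ℝ (affineSpan ℝ S' : Set E) :=
            affineSpan_mono ℝ h5
        _ = affineSpan ℝ S' := AffineSubspace.affineSpan_coe _
    rw [h4] at h7
    exact top_le_iff.mp h7
  obtain ⟨t₀, ht₀⟩ : (interior T).Nonempty :=
    interior_convexHull_nonempty_iff_affineSpan_eq_top.mpr haff2
  refine ⟨c, ?_⟩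
  intro x hx
  have hxcl : x ∈ interior (closure T) := hcint hx
  by_cases hxt : x = t₀
  · exact hxt ▸ interior_subset ht₀
  obtain ⟨ρ, hρ, hρball⟩ := Metric.mem_nhds_iff.mp (mem_interior_iff_mem_nhds.mp hxcl)
  set v : E := x - t₀ with hvdef
  have hv : v ≠ 0 := sub_ne_zero.mpr hxt
  have hnv : (0:ℝ) < ‖v‖ := norm_pos_iff.mpr hv
  set δ : ℝ := ρ / (2 * ‖v‖) with hδdef
  have hδ : 0 < δ := by positivity
  have hy' : x + δ • v ∈ closure T := by
    apply hρball
    rw [mem_ball, dist_eq_norm, add_sub_cancel_left, norm_smul, Real.norm_eq_abs, abs_of_pos hδ]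
    have hh : δ * ‖v‖ = ρ / 2 := by rw [hδdef]; field_simp
    rw [hh]; linarith
  have ht : δ/(1+δ) ∈ Ioc (0:ℝ) 1 :=
    ⟨by positivity, by rw [div_le_one (by linarith)]; linarith⟩
  have key := hconvT.add_smul_sub_mem_interior' hy' ht₀ ht
  have h1δ : (1+δ) ≠ 0 := by positivity
  have heq : (x + δ • v) + (δ/(1+δ)) • (t₀ - (x + δ • v)) = x := by
    rw [hvdef]
    set_option linter.unnecessarySeqFocus false in
    match_scalars <;> field_simp <;> ring
  rw [heq] at key
  exact interior_subset key
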